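/- Let t₀ ∈ ℝ and let F: [-π/2, π/2] × (-∞, t₀] → ℝ be continuous, twice continuously differentiable in ψ up to the endpoints and continuously differentiable in t, with all these derivatives jointly continuous, and with ∂_ψ F(±π/2, t) = 0 for every t ≤ t₀. Let a: (-π/2, π/2) × (-∞, t₀] → ℝ be continuous, bounded, and nonnegative, and assume ∂_t F(ψ, t) ≤ a(ψ, t)·(∂_ψψ F(ψ, t) - tan(ψ)·∂_ψ F(ψ, t)) for all (ψ,t) ∈ (-π/2, π/2) × (-∞, t₀]. Then t ↦ max_{ψ ∈ [-π/2, π/2]} F(ψ, t) is nonincreasing on (-∞, t₀]: for all t₁ ≤ t₂ ≤ t₀, max_ψ F(ψ, t₂) ≤ max_ψ F(ψ, t₁). -/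

import Mathlib

open Real Set

/-- First spatial derivative `∂_ψ F`. -/
noncomputable def dps (F : ℝ → ℝ → ℝ) (ψ t : ℝ) : ℝ := deriv (fun s => F s t) ψ

/-- Second spatial derivative `∂_ψψ F`. -/
noncomputable def dpsps (F : ℝ → ℝ → ℝ) (ψ t : ℝ) : ℝ := deriv (deriv (fun s => F s t)) ψ

/-- Time derivative `∂_t F`. -/
noncomputable def dtime (F : ℝ → ℝ → ℝ) (ψ t : ℝ) : ℝ := deriv (fun s => F ψ s) t

lemma tan_mul_le' {ψ : ℝ} (h1 : 0 ≤ ψ) (h2 : ψ < π/2) : tan ψ * (π/2 - ψ) ≤ π/2 := by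
  have hpi := pi_pos
  have hc : 0 < cos ψ := cos_pos_of_mem_Ioo ⟨by linarith, h2⟩
  have hs : sin ψ ≤ 1 := sin_le_one ψ
  have hlow : 2/π * (π/2 - ψ) ≤ cos ψ := by
    rw [← Real.sin_pi_div_two_sub]
    exact mul_le_sin (by linarith) (by linarith)
  rw [Real.tan_eq_sin_div_cos, div_mul_eq_mul_div, div_le_iff₀ hc]
  rw [div_mul_eq_mul_div, div_le_iff₀ hpi] at hlow
  nlinarith [mul_le_mul_of_nonneg_right hs (by linarith : (0:ℝ) ≤ π/2 - ψ)]

lemma slope_ub {u v C : ℝ} {g h : ℝ → ℝ} (huv : u < v)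
    (hc : ContinuousOn g (Icc u v)) (hd : ∀ x ∈ Ioo u v, HasDerivAt g (h x) x)
    (hb : ∀ x ∈ Ioo u v, h x ≤ C) : g v - g u ≤ C * (v - u) := by
  obtain ⟨c, hc1, hc2⟩ := exists_hasDerivAt_eq_slope g h huv hc hd
  have h1 := hb c hc1
  rw [hc2] at h1
  have h2 := (div_le_iff₀ (by linarith)).1 h1
  linarith

lemma slope_lb {u v C : ℝ} {g h : ℝ → ℝ} (huv : u < v)
    (hc : ContinuousOn g (Icc u v)) (hd : ∀ x ∈ Ioo u v, HasDerivAt g (h x) x)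
    (hb : ∀ x ∈ Ioo u v, C ≤ h x) : C * (v - u) ≤ g v - g u := by
  obtain ⟨c, hc1, hc2⟩ := exists_hasDerivAt_eq_slope g h huv hc hd
  have h1 := hb c hc1
  rw [hc2] at h1
  have h2 := (le_div_iff₀ (by linarith)).1 h1
  linarith

lemma deriv_nonneg_left' {φ : ℝ → ℝ} {d t₁ s : ℝ} (h : t₁ < s)
    (hd : HasDerivAt φ d s) (hm : ∀ u ∈ Icc t₁ s, φ u ≤ φ s) : 0 ≤ d := by
  have ht : Filter.Tendsto (slope φ s) (nhdsWithin s (Iio s)) (nhds d) :=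
    (hasDerivAt_iff_tendsto_slope.1 hd).mono_left
      (nhdsWithin_mono _ (fun x hx => ne_of_lt hx))
  refine ge_of_tendsto ht ?_
  filter_upwards [Ioo_mem_nhdsLT_of_mem ⟨h, le_refl s⟩] with u hu
  have h1 : φ u - φ s ≤ 0 := sub_nonpos.2 (hm u ⟨hu.1.le, hu.2.le⟩)
  have h2 : u - s < 0 := sub_neg.2 hu.2
  rw [slope_def_field]
  exact div_nonneg_iff.2 (Or.inr ⟨h1, h2.le⟩)

lemma second_nonpos_left {a x : ℝ} {f g h : ℝ → ℝ} (hax : a < x)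
    (hfg : ∀ ψ ∈ Ioo a x, HasDerivAt f (g ψ) ψ)
    (hgh : ∀ ψ ∈ Ioo a x, HasDerivAt g (h ψ) ψ)
    (hf : ContinuousOn f (Icc a x)) (hg : ContinuousOn g (Icc a x))
    (hh : ContinuousWithinAt h (Icc a x) x)
    (hg0 : g x = 0) (hmax : ∀ ψ ∈ Icc a x, f ψ ≤ f x) : h x ≤ 0 := by
  by_contra hcpos
  push_neg at hcpos
  have hev : ∀ᶠ ψ in nhdsWithin x (Icc a x), h x / 2 < h ψ :=
    hh.eventually (eventually_gt_nhds (by linarith))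
  obtain ⟨η, hη, hball⟩ := Metric.mem_nhdsWithin_iff.1 hev
  set b0 : ℝ := max a (x - η/2) with hb0
  set ψ₀ : ℝ := (b0 + x)/2 with hψ₀
  have hb1 : a ≤ b0 := le_max_left _ _
  have hb2 : x - η/2 ≤ b0 := le_max_right _ _
  have hb0x : b0 < x := max_lt hax (by linarith)
  have hψ₀1 : b0 < ψ₀ := by rw [hψ₀]; linarith
  have hψ₀2 : ψ₀ < x := by rw [hψ₀]; linarith
  have hψ₀a : a < ψ₀ := lt_of_le_of_lt hb1 hψ₀1
  have hnear : ∀ ψ, ψ₀ ≤ ψ → ψ ≤ x → h x / 2 ≤ h ψ := by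
    intro ψ hl hr
    refine le_of_lt (hball ⟨?_, ⟨by linarith, hr⟩⟩)
    simp only [Metric.mem_ball, Real.dist_eq, abs_lt]
    constructor <;> linarith
  have hgneg : ∀ ψ ∈ Ioo ψ₀ x, g ψ < 0 := by
    intro ψ hψ
    have hkey := slope_lb hψ.2 (hg.mono (Icc_subset_Icc (by linarith [hψ.1]) le_rfl))
      (fun y hy => hgh y ⟨by linarith [hy.1, hψ.1], hy.2⟩)
      (fun y hy => hnear y (by linarith [hy.1, hψ.1]) hy.2.le)
    rw [hg0] at hkey
    have hpos : 0 < h x / 2 * (x - ψ) := mul_pos (by linarith) (by linarith [hψ.2])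
    linarith
  obtain ⟨ξ, hξ, hslope⟩ := exists_hasDerivAt_eq_slope f g hψ₀2
    (hf.mono (Icc_subset_Icc hψ₀a.le le_rfl))
    (fun y hy => hfg y ⟨lt_trans hψ₀a hy.1, hy.2⟩)
  have h1 : g ξ < 0 := hgneg ξ hξ
  have h2 : f ψ₀ ≤ f x := hmax ψ₀ ⟨hψ₀a.le, hψ₀2.le⟩
  rw [hslope] at h1
  have h3 : 0 ≤ (f x - f ψ₀) / (x - ψ₀) := div_nonneg (by linarith) (by linarith)
  linarith

lemma second_nonpos_right {x b : ℝ} {f g h : ℝ → ℝ} (hxb : x < b)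
    (hfg : ∀ ψ ∈ Ioo x b, HasDerivAt f (g ψ) ψ)
    (hgh : ∀ ψ ∈ Ioo x b, HasDerivAt g (h ψ) ψ)
    (hf : ContinuousOn f (Icc x b)) (hg : ContinuousOn g (Icc x b))
    (hh : ContinuousWithinAt h (Icc x b) x)
    (hg0 : g x = 0) (hmax : ∀ ψ ∈ Icc x b, f ψ ≤ f x) : h x ≤ 0 := by
  by_contra hcpos
  push_neg at hcpos
  have hev : ∀ᶠ ψ in nhdsWithin x (Icc x b), h x / 2 < h ψ :=
    hh.eventually (eventually_gt_nhds (by linarith))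
  obtain ⟨η, hη, hball⟩ := Metric.mem_nhdsWithin_iff.1 hev
  set b0 : ℝ := min b (x + η/2) with hb0
  set ψ₀ : ℝ := (x + b0)/2 with hψ₀
  have hb1 : b0 ≤ b := min_le_left _ _
  have hb2 : b0 ≤ x + η/2 := min_le_right _ _
  have hb0x : x < b0 := lt_min hxb (by linarith)
  have hψ₀1 : ψ₀ < b0 := by rw [hψ₀]; linarith
  have hψ₀2 : x < ψ₀ := by rw [hψ₀]; linarith
  have hψ₀b : ψ₀ < b := lt_of_lt_of_le hψ₀1 hb1
  have hnear : ∀ ψ, x ≤ ψ → ψ ≤ ψ₀ → h x / 2 ≤ h ψ := by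
    intro ψ hl hr
    refine le_of_lt (hball ⟨?_, ⟨hl, by linarith⟩⟩)
    simp only [Metric.mem_ball, Real.dist_eq, abs_lt]
    constructor <;> linarith
  have hgpos : ∀ ψ ∈ Ioo x ψ₀, 0 < g ψ := by
    intro ψ hψ
    have hkey := slope_lb hψ.1 (hg.mono (Icc_subset_Icc le_rfl (by linarith [hψ.2])))
      (fun y hy => hgh y ⟨hy.1, by linarith [hy.2, hψ.2]⟩)
      (fun y hy => hnear y hy.1.le (by linarith [hy.2, hψ.2]))
    rw [hg0] at hkey
    have hpos : 0 < h x / 2 * (ψ - x) := mul_pos (by linarith) (by linarith [hψ.1])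
    linarith
  obtain ⟨ξ, hξ, hslope⟩ := exists_hasDerivAt_eq_slope f g hψ₀2
    (hf.mono (Icc_subset_Icc le_rfl hψ₀b.le))
    (fun y hy => hfg y ⟨hy.1, lt_trans hy.2 hψ₀b⟩)
  have h1 : 0 < g ξ := hgpos ξ hξ
  have h2 : f ψ₀ ≤ f x := hmax ψ₀ ⟨hψ₀2.le, hψ₀b.le⟩
  rw [hslope] at h1
  have h3 : (f ψ₀ - f x) / (ψ₀ - x) ≤ 0 :=
    div_nonpos_of_nonpos_of_nonneg (by linarith) (by linarith)
  linarith

lemma pole_right {f g h : ℝ → ℝ}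
    (hfg : ∀ ψ ∈ Ioo (-(π/2)) (π/2), HasDerivAt f (g ψ) ψ)
    (hgh : ∀ ψ ∈ Ioo (-(π/2)) (π/2), HasDerivAt g (h ψ) ψ)
    (hf : ContinuousOn f (Icc (-(π/2)) (π/2)))
    (hg : ContinuousOn g (Icc (-(π/2)) (π/2)))
    (hh : ContinuousOn h (Icc (-(π/2)) (π/2)))
    (hg0 : g (π/2) = 0)
    (hmax : ∀ ψ ∈ Icc (-(π/2)) (π/2), f ψ ≤ f (π/2))
    {δ η : ℝ} (hδ : 0 < δ) (hη : 0 < η) :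
    ∃ ψ ∈ Ioo (-(π/2)) (π/2), π/2 - ψ < η ∧ h ψ - tan ψ * g ψ ≤ δ := by
  have hpi := pi_pos
  have hmem : (π/2) ∈ Icc (-(π/2)) (π/2) := ⟨by linarith, le_rfl⟩
  have hc : h (π/2) ≤ 0 :=
    second_nonpos_left (by linarith) hfg hgh hf hg (hh.continuousWithinAt hmem) hg0 hmax
  set c := h (π/2) with hcdef
  set δ' := δ/3 with hδ'
  have hδ'0 : 0 < δ' := by positivity
  have hev : ∀ᶠ ψ in nhdsWithin (π/2) (Icc (-(π/2)) (π/2)), h ψ < c + δ' :=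
    (hh.continuousWithinAt hmem).eventually (eventually_lt_nhds (by linarith))
  obtain ⟨η₂, hη₂, hball⟩ := Metric.mem_nhdsWithin_iff.1 hev
  set m : ℝ := min (min η η₂) (π/2) / 2 with hm
  have hm0 : 0 < m := by
    have := lt_min (lt_min hη hη₂) (by linarith : (0:ℝ) < π/2)
    rw [hm]; linarith
  have hmη : m < η := by
    have h1 : min (min η η₂) (π/2) ≤ min η η₂ := min_le_left _ _
    have h2 : min η η₂ ≤ η := min_le_left _ _
    rw [hm]; linarith
  have hmη₂ : m < η₂ := by
    have h1 : min (min η η₂) (π/2) ≤ min η η₂ := min_le_left _ _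
    have h2 : min η η₂ ≤ η₂ := min_le_right _ _
    rw [hm]; linarith
  have hmπ : m ≤ π/4 := by
    have h1 : min (min η η₂) (π/2) ≤ π/2 := min_le_right _ _
    rw [hm]; linarith
  set ψ : ℝ := π/2 - m with hψdef
  have hψpos : 0 < ψ := by rw [hψdef]; linarith
  have hψmem : ψ ∈ Ioo (-(π/2)) (π/2) := ⟨by rw [hψdef]; linarith, by rw [hψdef]; linarith⟩
  have hhb : ∀ y, ψ ≤ y → y ≤ π/2 → h y ≤ c + δ' := by
    intro y h1 h2
    refine le_of_lt (hball ⟨?_, ⟨by rw [hψdef] at h1; linarith, h2⟩⟩)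
    simp only [Metric.mem_ball, Real.dist_eq, abs_lt]
    rw [hψdef] at h1
    constructor <;> linarith
  have hgb := slope_ub hψmem.2 (hg.mono (Icc_subset_Icc hψmem.1.le le_rfl))
      (fun y hy => hgh y ⟨lt_trans hψmem.1 hy.1, hy.2⟩)
      (fun y hy => hhb y hy.1.le hy.2.le)
  rw [hg0] at hgb
  refine ⟨ψ, hψmem, by rw [hψdef]; linarith, ?_⟩
  have htan : 0 ≤ tan ψ := by
    rw [tan_eq_sin_div_cos]
    exact div_nonneg (sin_nonneg_of_nonneg_of_le_pi hψpos.le (by rw [hψdef]; linarith))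
      (cos_pos_of_mem_Ioo ⟨hψmem.1, hψmem.2⟩).le
  have hhψ : h ψ ≤ c + δ' := hhb ψ le_rfl hψmem.2.le
  have key : - (tan ψ * g ψ) ≤ π/2 * δ' := by
    have h1 : tan ψ * (-(g ψ)) ≤ tan ψ * ((c + δ') * (π/2 - ψ)) :=
      mul_le_mul_of_nonneg_left (by linarith) htan
    have hrw : tan ψ * (-(g ψ)) = -(tan ψ * g ψ) := by ring
    rcases le_or_gt (c + δ') 0 with hcd | hcd
    · have h2 : tan ψ * ((c + δ') * (π/2 - ψ)) ≤ 0 :=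
        mul_nonpos_iff.2 (Or.inl ⟨htan,
          mul_nonpos_iff.2 (Or.inr ⟨hcd, by linarith [hψmem.2]⟩)⟩)
      have h5 : (0:ℝ) ≤ π/2 * δ' := by positivity
      linarith
    · have h2 : tan ψ * ((c + δ') * (π/2 - ψ)) = (tan ψ * (π/2 - ψ)) * (c + δ') := by ring
      have h3 : (tan ψ * (π/2 - ψ)) * (c + δ') ≤ (π/2) * (c + δ') :=
        mul_le_mul_of_nonneg_right (tan_mul_le' hψpos.le hψmem.2) hcd.le
      have h4 : (π/2) * (c + δ') ≤ (π/2) * δ' :=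
        mul_le_mul_of_nonneg_left (by linarith) (by linarith)
      linarith
  have hfin : π/2 * δ' ≤ 2 * δ' :=
    mul_le_mul_of_nonneg_right (by linarith [pi_le_four]) hδ'0.le
  linarith

lemma pole_left {f g h : ℝ → ℝ}
    (hfg : ∀ ψ ∈ Ioo (-(π/2)) (π/2), HasDerivAt f (g ψ) ψ)
    (hgh : ∀ ψ ∈ Ioo (-(π/2)) (π/2), HasDerivAt g (h ψ) ψ)
    (hf : ContinuousOn f (Icc (-(π/2)) (π/2)))
    (hg : ContinuousOn g (Icc (-(π/2)) (π/2)))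
    (hh : ContinuousOn h (Icc (-(π/2)) (π/2)))
    (hg0 : g (-(π/2)) = 0)
    (hmax : ∀ ψ ∈ Icc (-(π/2)) (π/2), f ψ ≤ f (-(π/2)))
    {δ η : ℝ} (hδ : 0 < δ) (hη : 0 < η) :
    ∃ ψ ∈ Ioo (-(π/2)) (π/2), ψ + π/2 < η ∧ h ψ - tan ψ * g ψ ≤ δ := by
  have hpi := pi_pos
  have hmem : (-(π/2)) ∈ Icc (-(π/2)) (π/2) := ⟨le_rfl, by linarith⟩
  have hc : h (-(π/2)) ≤ 0 :=
    second_nonpos_right (by linarith) hfg hgh hf hg (hh.continuousWithinAt hmem) hg0 hmax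
  set c := h (-(π/2)) with hcdef
  set δ' := δ/3 with hδ'
  have hδ'0 : 0 < δ' := by positivity
  have hev : ∀ᶠ ψ in nhdsWithin (-(π/2)) (Icc (-(π/2)) (π/2)), h ψ < c + δ' :=
    (hh.continuousWithinAt hmem).eventually (eventually_lt_nhds (by linarith))
  obtain ⟨η₂, hη₂, hball⟩ := Metric.mem_nhdsWithin_iff.1 hev
  set m : ℝ := min (min η η₂) (π/2) / 2 with hm
  have hm0 : 0 < m := by
    have := lt_min (lt_min hη hη₂) (by linarith : (0:ℝ) < π/2)
    rw [hm]; linarith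
  have hmη : m < η := by
    have h1 : min (min η η₂) (π/2) ≤ min η η₂ := min_le_left _ _
    have h2 : min η η₂ ≤ η := min_le_left _ _
    rw [hm]; linarith
  have hmη₂ : m < η₂ := by
    have h1 : min (min η η₂) (π/2) ≤ min η η₂ := min_le_left _ _
    have h2 : min η η₂ ≤ η₂ := min_le_right _ _
    rw [hm]; linarith
  have hmπ : m ≤ π/4 := by
    have h1 : min (min η η₂) (π/2) ≤ π/2 := min_le_right _ _
    rw [hm]; linarith
  set ψ : ℝ := -(π/2) + m with hψdef
  have hψneg : ψ < 0 := by rw [hψdef]; linarith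
  have hψmem : ψ ∈ Ioo (-(π/2)) (π/2) := ⟨by rw [hψdef]; linarith, by rw [hψdef]; linarith⟩
  have hhb : ∀ y, -(π/2) ≤ y → y ≤ ψ → h y ≤ c + δ' := by
    intro y h1 h2
    refine le_of_lt (hball ⟨?_, ⟨h1, by rw [hψdef] at h2; linarith⟩⟩)
    simp only [Metric.mem_ball, Real.dist_eq, abs_lt]
    rw [hψdef] at h2
    constructor <;> linarith
  have hgb := slope_ub hψmem.1 (hg.mono (Icc_subset_Icc le_rfl hψmem.2.le))
      (fun y hy => hgh y ⟨hy.1, lt_trans hy.2 hψmem.2⟩)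
      (fun y hy => hhb y hy.1.le hy.2.le)
  rw [hg0] at hgb
  refine ⟨ψ, hψmem, by rw [hψdef]; linarith, ?_⟩
  have htan : tan ψ ≤ 0 := by
    rw [tan_eq_sin_div_cos]
    refine div_nonpos_of_nonpos_of_nonneg ?_ (cos_pos_of_mem_Ioo ⟨hψmem.1, hψmem.2⟩).le
    have := sin_nonneg_of_nonneg_of_le_pi (by linarith : (0:ℝ) ≤ -ψ) (by rw [hψdef]; linarith)
    rw [sin_neg] at this; linarith
  have hhψ : h ψ ≤ c + δ' := hhb ψ hψmem.1.le le_rfl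
  have htanb : (-(tan ψ)) * (ψ + π/2) ≤ π/2 := by
    have h0 := tan_mul_le' (ψ := -ψ) (by linarith : (0:ℝ) ≤ -ψ) (by linarith [hψmem.1] : -ψ < π/2)
    rw [tan_neg] at h0
    have hrw : -tan ψ * (π/2 - -ψ) = (-(tan ψ)) * (ψ + π/2) := by ring
    linarith
  have hgψ : g ψ ≤ (c + δ') * (ψ + π/2) := by
    have h2 : (c + δ') * (ψ - -(π/2)) = (c + δ') * (ψ + π/2) := by ring
    linarith
  have key : - (tan ψ * g ψ) ≤ π/2 * δ' := by
    have h1 : (-(tan ψ)) * g ψ ≤ (-(tan ψ)) * ((c + δ') * (ψ + π/2)) :=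
      mul_le_mul_of_nonneg_left hgψ (by linarith)
    have hrw : (-(tan ψ)) * g ψ = -(tan ψ * g ψ) := by ring
    rcases le_or_gt (c + δ') 0 with hcd | hcd
    · have h2 : (-(tan ψ)) * ((c + δ') * (ψ + π/2)) ≤ 0 :=
        mul_nonpos_iff.2 (Or.inl ⟨by linarith,
          mul_nonpos_iff.2 (Or.inr ⟨hcd, by linarith [hψmem.1]⟩)⟩)
      have h5 : (0:ℝ) ≤ π/2 * δ' := by positivity
      linarith
    · have h2 : (-(tan ψ)) * ((c + δ') * (ψ + π/2)) = ((-(tan ψ)) * (ψ + π/2)) * (c + δ') := by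
        ring
      have h3 : ((-(tan ψ)) * (ψ + π/2)) * (c + δ') ≤ (π/2) * (c + δ') :=
        mul_le_mul_of_nonneg_right htanb hcd.le
      have h4 : (π/2) * (c + δ') ≤ (π/2) * δ' :=
        mul_le_mul_of_nonneg_left (by linarith) (by linarith)
      linarith
  have hfin : π/2 * δ' ≤ 2 * δ' :=
    mul_le_mul_of_nonneg_right (by linarith [pi_le_four]) hδ'0.le
  linarith

/-- Maximum principle on the sphere: if `F_t ≤ a·(F_ψψ - tan ψ · F_ψ)` with `a ≥ 0`
bounded, and `F` is smooth at the poles (`F_ψ(±π/2, t) = 0`), then the spatial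
maximum of `F` is nonincreasing in time. -/
theorem max_principle_sphere
    (t₀ : ℝ) (F : ℝ → ℝ → ℝ)
    (hcont : ContinuousOn (fun p : ℝ × ℝ => F p.1 p.2)
      (Set.Icc (-(π / 2)) (π / 2) ×ˢ Set.Iic t₀))
    (hψreg : ∀ t ≤ t₀, ContDiffOn ℝ 2 (fun ψ => F ψ t) (Set.Icc (-(π / 2)) (π / 2)))
    (htreg : ∀ ψ ∈ Set.Icc (-(π / 2)) (π / 2), ContDiffOn ℝ 1 (fun s => F ψ s) (Set.Iic t₀))
    (hjc1 : ContinuousOn (fun p : ℝ × ℝ => dps F p.1 p.2)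
      (Set.Icc (-(π / 2)) (π / 2) ×ˢ Set.Iic t₀))
    (hjc2 : ContinuousOn (fun p : ℝ × ℝ => dpsps F p.1 p.2)
      (Set.Icc (-(π / 2)) (π / 2) ×ˢ Set.Iic t₀))
    (hjc3 : ContinuousOn (fun p : ℝ × ℝ => dtime F p.1 p.2)
      (Set.Icc (-(π / 2)) (π / 2) ×ˢ Set.Iic t₀))
    (hpole : ∀ t ≤ t₀, dps F (-(π / 2)) t = 0 ∧ dps F (π / 2) t = 0)
    (a : ℝ → ℝ → ℝ)
    (hacont : ContinuousOn (fun p : ℝ × ℝ => a p.1 p.2)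
      (Set.Ioo (-(π / 2)) (π / 2) ×ˢ Set.Iic t₀))
    (habdd : ∃ Ca : ℝ, ∀ ψ ∈ Set.Ioo (-(π / 2)) (π / 2), ∀ t ≤ t₀, a ψ t ≤ Ca)
    (hapos : ∀ ψ ∈ Set.Ioo (-(π / 2)) (π / 2), ∀ t ≤ t₀, 0 ≤ a ψ t)
    (hineq : ∀ ψ ∈ Set.Ioo (-(π / 2)) (π / 2), ∀ t ≤ t₀,
      dtime F ψ t ≤ a ψ t * (dpsps F ψ t - Real.tan ψ * dps F ψ t)) :
    ∀ t₁ t₂ : ℝ, t₁ ≤ t₂ → t₂ ≤ t₀ →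
      sSup ((fun ψ => F ψ t₂) '' Set.Icc (-(π / 2)) (π / 2)) ≤
        sSup ((fun ψ => F ψ t₁) '' Set.Icc (-(π / 2)) (π / 2)) := by
  intro t₁ t₂ h12 h20
  have hpi := pi_pos
  have hIne : (π/2) ∈ Set.Icc (-(π / 2)) (π / 2) := ⟨by linarith, le_rfl⟩
  obtain ⟨Ca, hCa⟩ := habdd
  set Ca' : ℝ := max Ca 0 with hCa'def
  have hCa'0 : 0 ≤ Ca' := le_max_right _ _
  set M : ℝ → ℝ := fun t => sSup ((fun ψ => F ψ t) '' Set.Icc (-(π / 2)) (π / 2)) with hMdef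
  have hMub : ∀ t, t ≤ t₀ → ∀ ψ ∈ Set.Icc (-(π / 2)) (π / 2), F ψ t ≤ M t := by
    intro t ht ψ hψ
    refine le_csSup ?_ ⟨ψ, hψ, rfl⟩
    exact (isCompact_Icc.image_of_continuousOn ((hψreg t ht).continuousOn)).bddAbove
  have hMle : ∀ t B, (∀ ψ ∈ Set.Icc (-(π / 2)) (π / 2), F ψ t ≤ B) → M t ≤ B := by
    intro t B hB
    refine csSup_le (Set.Nonempty.image _ ⟨π/2, hIne⟩) ?_
    rintro y ⟨ψ, hψ, rfl⟩
    exact hB ψ hψ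
  -- Key claim
  have claim : ∀ ε, 0 < ε → ∀ t, t₁ ≤ t → t ≤ t₂ → t < t₀ → M t ≤ M t₁ + ε * (t - t₁) := by
    intro ε hε t ht1 ht2 ht0
    by_contra hcon
    push_neg at hcon
    have ht1t : t₁ < t := by
      rcases eq_or_lt_of_le ht1 with rfl | hlt
      · have : ε * (t₁ - t₁) = 0 := by ring
        linarith
      · exact hlt
    have hKsub : (Set.Icc (-(π / 2)) (π / 2) ×ˢ Set.Icc t₁ t) ⊆
        Set.Icc (-(π / 2)) (π / 2) ×ˢ Set.Iic t₀ :=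
      Set.prod_mono_right (fun s hs => le_trans hs.2 ht0.le)
    have hKc : IsCompact (Set.Icc (-(π / 2)) (π / 2) ×ˢ Set.Icc t₁ t) :=
      isCompact_Icc.prod isCompact_Icc
    have hKne : (Set.Icc (-(π / 2)) (π / 2) ×ˢ Set.Icc t₁ t).Nonempty :=
      ⟨(π/2, t₁), hIne, le_rfl, ht1t.le⟩
    have hGc : ContinuousOn (fun p : ℝ × ℝ => F p.1 p.2 - ε * (p.2 - t₁))
        (Set.Icc (-(π / 2)) (π / 2) ×ˢ Set.Icc t₁ t) :=
      (hcont.mono hKsub).sub (Continuous.continuousOn (continuous_const.mul (continuous_snd.sub continuous_const)))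
    obtain ⟨⟨ψs, ss⟩, hmemK, hmax⟩ := hKc.exists_isMaxOn hKne hGc
    rw [isMaxOn_iff] at hmax
    have hψsI : ψs ∈ Set.Icc (-(π / 2)) (π / 2) := hmemK.1
    have hssI : ss ∈ Set.Icc t₁ t := hmemK.2
    have hsslt : ss < t₀ := lt_of_le_of_lt hssI.2 ht0
    have hss0 : ss ≤ t₀ := hsslt.le
    have hMtm : M t ≤ (F ψs ss - ε * (ss - t₁)) + ε * (t - t₁) := by
      apply hMle
      intro ψ hψ
      have := hmax (ψ, t) ⟨hψ, ht1, le_rfl⟩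
      simp only at this
      linarith
    have hmM1 : M t₁ < F ψs ss - ε * (ss - t₁) := by linarith
    have hsst1 : t₁ < ss := by
      rcases eq_or_lt_of_le hssI.1 with rfl | hlt
      · exfalso
        have h1 := hMub t₁ (le_trans ht1 ht0.le) ψs hψsI
        have h2 : ε * (t₁ - t₁) = 0 := by ring
        linarith
      · exact hlt
    have hd : HasDerivAt (fun s => F ψs s) (dtime F ψs ss) ss := by
      have h1 : Set.Iic t₀ ∈ nhds ss := Iic_mem_nhds hsslt
      exact (((htreg ψs hψsI).contDiffAt h1).differentiableAt (by norm_num)).hasDerivAt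
    have hdge : ε ≤ dtime F ψs ss := by
      have hlin : HasDerivAt (fun s : ℝ => ε * (s - t₁)) ε ss := by
        simpa using ((hasDerivAt_id ss).sub_const t₁).const_mul ε
      have hGd : HasDerivAt (fun s => F ψs s - ε * (s - t₁)) (dtime F ψs ss - ε) ss :=
        hd.sub hlin
      have h0 : (0:ℝ) ≤ dtime F ψs ss - ε := by
        refine deriv_nonneg_left' hsst1 hGd ?_
        intro u hu
        have := hmax (ψs, u) ⟨hψsI, hu.1, le_trans hu.2 hssI.2⟩
        simpa using this
      linarith
    -- spatial facts at time ss
    have hfmax : ∀ ψ ∈ Set.Icc (-(π / 2)) (π / 2), F ψ ss ≤ F ψs ss := by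
      intro ψ hψ
      have := hmax (ψ, ss) ⟨hψ, hssI⟩
      simp only at this
      linarith
    have hfc : ContinuousOn (fun ψ => F ψ ss) (Set.Icc (-(π / 2)) (π / 2)) :=
      (hψreg ss hss0).continuousOn
    have hgc : ContinuousOn (fun ψ => dps F ψ ss) (Set.Icc (-(π / 2)) (π / 2)) :=
      hjc1.comp (Continuous.continuousOn (continuous_id.prodMk continuous_const)) (fun ψ hψ => ⟨hψ, hss0⟩)
    have hhc : ContinuousOn (fun ψ => dpsps F ψ ss) (Set.Icc (-(π / 2)) (π / 2)) :=
      hjc2.comp (Continuous.continuousOn (continuous_id.prodMk continuous_const)) (fun ψ hψ => ⟨hψ, hss0⟩)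
    have hdc : ContinuousOn (fun ψ => dtime F ψ ss) (Set.Icc (-(π / 2)) (π / 2)) :=
      hjc3.comp (Continuous.continuousOn (continuous_id.prodMk continuous_const)) (fun ψ hψ => ⟨hψ, hss0⟩)
    have hfg : ∀ ψ ∈ Set.Ioo (-(π/2)) (π/2),
        HasDerivAt (fun ψ => F ψ ss) (dps F ψ ss) ψ := by
      intro ψ hψ
      have h1 : Set.Icc (-(π / 2)) (π / 2) ∈ nhds ψ := Icc_mem_nhds hψ.1 hψ.2
      exact (((hψreg ss hss0).contDiffAt h1).differentiableAt (by norm_num)).hasDerivAt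
    have hgh : ∀ ψ ∈ Set.Ioo (-(π/2)) (π/2),
        HasDerivAt (fun ψ => dps F ψ ss) (dpsps F ψ ss) ψ := by
      have hC2 : ContDiffOn ℝ 2 (fun ψ => F ψ ss) (Set.Ioo (-(π/2)) (π/2)) :=
        (hψreg ss hss0).mono Set.Ioo_subset_Icc_self
      have hd1 : ContDiffOn ℝ 1 (deriv (fun ψ => F ψ ss)) (Set.Ioo (-(π/2)) (π/2)) :=
        hC2.deriv_of_isOpen isOpen_Ioo (by norm_num)
      intro ψ hψ
      exact ((hd1.differentiableOn (by norm_num)).differentiableAt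
        (isOpen_Ioo.mem_nhds hψ)).hasDerivAt
    set δ : ℝ := ε / (2 * (Ca' + 1)) with hδdef
    have hδ0 : 0 < δ := by positivity
    obtain ⟨ψc, hψcmem, hdge2, hexpr⟩ :
        ∃ ψc ∈ Set.Ioo (-(π/2)) (π/2), ε/2 ≤ dtime F ψc ss ∧
          dpsps F ψc ss - Real.tan ψc * dps F ψc ss ≤ δ := by
      rcases eq_or_lt_of_le hψsI.2 with hR | hltR
      · -- right pole
        have hev : ∀ᶠ ψ in nhdsWithin (π/2) (Set.Icc (-(π / 2)) (π / 2)),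
            ε/2 < dtime F ψ ss := by
          refine (hdc.continuousWithinAt hIne).eventually (eventually_gt_nhds ?_)
          rw [← hR]
          linarith
        obtain ⟨η, hη0, hball⟩ := Metric.mem_nhdsWithin_iff.1 hev
        obtain ⟨ψc, hmemc, hnear, hexpr⟩ := pole_right hfg hgh hfc hgc hhc
          (hpole ss hss0).2 (fun ψ hψ => hR ▸ hfmax ψ hψ) hδ0 hη0
        refine ⟨ψc, hmemc, le_of_lt ?_, hexpr⟩
        refine hball ⟨?_, hmemc.1.le, hmemc.2.le⟩
        simp only [Metric.mem_ball, Real.dist_eq, abs_lt]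
        constructor <;> linarith [hmemc.2]
      rcases eq_or_lt_of_le hψsI.1 with hL | hltL
      · -- left pole
        have hmemL : (-(π/2)) ∈ Set.Icc (-(π / 2)) (π / 2) := ⟨le_rfl, by linarith⟩
        have hev : ∀ᶠ ψ in nhdsWithin (-(π/2)) (Set.Icc (-(π / 2)) (π / 2)),
            ε/2 < dtime F ψ ss := by
          refine (hdc.continuousWithinAt hmemL).eventually (eventually_gt_nhds ?_)
          rw [hL]
          linarith
        obtain ⟨η, hη0, hball⟩ := Metric.mem_nhdsWithin_iff.1 hev
        obtain ⟨ψc, hmemc, hnear, hexpr⟩ := pole_left hfg hgh hfc hgc hhc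
          (hpole ss hss0).1 (fun ψ hψ => hL ▸ hfmax ψ hψ) hδ0 hη0
        refine ⟨ψc, hmemc, le_of_lt ?_, hexpr⟩
        refine hball ⟨?_, hmemc.1.le, hmemc.2.le⟩
        simp only [Metric.mem_ball, Real.dist_eq, abs_lt]
        constructor <;> linarith [hmemc.1]
      · -- interior
        have hψsIoo : ψs ∈ Set.Ioo (-(π/2)) (π/2) := ⟨hltL, hltR⟩
        have hloc : IsLocalMax (fun ψ => F ψ ss) ψs :=
          Filter.eventually_of_mem (Icc_mem_nhds hltL hltR) (fun ψ hψ => hfmax ψ hψ)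
        have hg0 : dps F ψs ss = 0 := hloc.hasDerivAt_eq_zero (hfg ψs hψsIoo)
        have hh0 : dpsps F ψs ss ≤ 0 :=
          second_nonpos_left (f := fun ψ => F ψ ss) (g := fun ψ => dps F ψ ss)
            (h := fun ψ => dpsps F ψ ss) hltL
            (fun y hy => hfg y ⟨hy.1, lt_trans hy.2 hltR⟩)
            (fun y hy => hgh y ⟨hy.1, lt_trans hy.2 hltR⟩)
            (hfc.mono (Set.Icc_subset_Icc le_rfl hltR.le))
            (hgc.mono (Set.Icc_subset_Icc le_rfl hltR.le))
            ((hhc.mono (Set.Icc_subset_Icc le_rfl hltR.le)).continuousWithinAt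
              ⟨hltL.le, le_rfl⟩)
            hg0 (fun y hy => hfmax y ⟨hy.1, le_trans hy.2 hltR.le⟩)
        refine ⟨ψs, hψsIoo, by linarith, ?_⟩
        rw [hg0]
        have : Real.tan ψs * 0 = 0 := by ring
        linarith
    -- final contradiction
    have hiq := hineq ψc hψcmem ss hss0
    have ha0 := hapos ψc hψcmem ss hss0
    have haC : a ψc ss ≤ Ca' := le_trans (hCa ψc hψcmem ss hss0) (le_max_left _ _)
    have h1 : a ψc ss * (dpsps F ψc ss - Real.tan ψc * dps F ψc ss) ≤ a ψc ss * δ :=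
      mul_le_mul_of_nonneg_left hexpr ha0
    have h2 : a ψc ss * δ ≤ Ca' * δ := mul_le_mul_of_nonneg_right haC hδ0.le
    have hkey : (Ca' + 1) * δ = ε / 2 := by
      rw [hδdef]
      field_simp
    nlinarith
  -- conclude
  rcases eq_or_lt_of_le h12 with rfl | h12'
  · exact le_rfl
  have hfinal : ∀ ε, 0 < ε → M t₂ ≤ M t₁ + ε * (t₂ - t₁) := by
    intro ε hε
    rcases eq_or_lt_of_le h20 with rfl | h2lt
    · apply hMle
      intro ψ hψ
      have hcw : ContinuousWithinAt (fun s => F ψ s) (Set.Iic t₂) t₂ :=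
        (htreg ψ hψ).continuousOn.continuousWithinAt Set.self_mem_Iic
      have htd : Filter.Tendsto (fun s => F ψ s) (nhdsWithin t₂ (Set.Iio t₂))
          (nhds (F ψ t₂)) :=
        hcw.mono_left (nhdsWithin_mono _ Set.Iio_subset_Iic_self)
      refine le_of_tendsto htd ?_
      filter_upwards [Ioo_mem_nhdsLT_of_mem ⟨h12', le_rfl⟩] with s hs
      have hcl := claim ε hε s hs.1.le hs.2.le hs.2
      have hFM := hMub s hs.2.le ψ hψ
      have hmono : ε * (s - t₁) ≤ ε * (t₂ - t₁) :=
        mul_le_mul_of_nonneg_left (by linarith [hs.2]) hε.le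
      linarith
    · exact claim ε hε t₂ h12 le_rfl h2lt
  by_contra hcon
  push_neg at hcon
  have hε0 : 0 < (M t₂ - M t₁)/(2*(t₂ - t₁)) := by
    apply div_pos <;> linarith
  have hfin := hfinal _ hε0
  have hne : t₂ - t₁ ≠ 0 := by intro hz; rw [sub_eq_zero] at hz; exact absurd hz (ne_of_gt h12')
  have heq : (M t₂ - M t₁)/(2*(t₂ - t₁)) * (t₂ - t₁) = (M t₂ - M t₁)/2 := by
    field_simp
  linarith
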